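/- Let F be a field with |F| = n' elements, and fix a 'balanced' partition (X', Y') of F meaning min(|X'|, |Y'|) ≥ n'/3. Partition F into n blocks of m = n'/n consecutive elements each, with m ≥ cn for a sufficiently large constant c. Then there exists an affine permutation σ (x ↦ ax+b, a ≠ 0) of F such that for every block i and each side k ∈ {X', Y'}, some element of block i is mapped into side k by σ. -/

import Mathlib

variable {F : Type} [Field F] [Fintype F] [DecidableEq F]

lemma card_sol_one (x y : F) :
    (Finset.univ.filter (fun p : F × F => p.1 * x + p.2 = y)).card = Fintype.card F := by
  rw [← Finset.card_univ]
  apply Finset.card_bij' (fun p _ => p.1) (fun a _ => (a, y - a * x))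
  · intro p hp; exact Finset.mem_univ _
  · intro a _; simp
  · intro p hp; simp only [Finset.mem_filter] at hp
    ext <;> simp [← hp.2]
  · intro a _; rfl

lemma card_sol_two (x x' : F) (hx : x ≠ x') (y y' : F) :
    (Finset.univ.filter (fun p : F × F => p.1 * x + p.2 = y ∧ p.1 * x' + p.2 = y')).card = 1 := by
  rw [Finset.card_eq_one]
  have hxx : x - x' ≠ 0 := sub_ne_zero_of_ne hx
  refine ⟨((y - y') / (x - x'), y - (y - y') / (x - x') * x), ?_⟩
  ext p
  simp only [Finset.mem_filter, Finset.mem_univ, true_and, Finset.mem_singleton]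
  constructor
  · rintro ⟨h1, h2⟩
    have ha : p.1 * (x - x') = y - y' := by linear_combination h1 - h2
    have ha' : p.1 = (y - y') / (x - x') := by rw [eq_div_iff hxx]; exact ha
    have hb : p.2 = y - (y - y') / (x - x') * x := by rw [← ha', ← h1]; ring
    exact Prod.ext ha' hb
  · rintro rfl
    constructor
    · ring
    · field_simp
      ring

lemma card_hit_one (T : Finset F) (x : F) :
    (Finset.univ.filter (fun p : F × F => p.1 * x + p.2 ∈ T)).card
      = T.card * Fintype.card F := by
  rw [Finset.card_eq_sum_card_fiberwise (f := fun p : F × F => p.1 * x + p.2) (t := T)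
      (s := Finset.univ.filter (fun p : F × F => p.1 * x + p.2 ∈ T))
      (fun p hp => (Finset.mem_filter.mp hp).2)]
  rw [Finset.sum_congr rfl (fun y hy => ?_), Finset.sum_const, smul_eq_mul]
  rw [Finset.filter_filter]
  rw [show (Finset.univ.filter fun p : F × F => p.1 * x + p.2 ∈ T ∧ p.1 * x + p.2 = y)
      = Finset.univ.filter fun p : F × F => p.1 * x + p.2 = y from
    Finset.filter_congr (fun p _ => Iff.intro (fun h => h.2) (fun h => ⟨h ▸ hy, h⟩))]
  exact card_sol_one x y

lemma card_hit_two (T : Finset F) (x x' : F) (hx : x ≠ x') :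
    (Finset.univ.filter (fun p : F × F => p.1 * x + p.2 ∈ T ∧ p.1 * x' + p.2 ∈ T)).card
      = T.card * T.card := by
  rw [Finset.card_eq_sum_card_fiberwise
      (f := fun p : F × F => (p.1 * x + p.2, p.1 * x' + p.2)) (t := T ×ˢ T)
      (s := Finset.univ.filter (fun p : F × F => p.1 * x + p.2 ∈ T ∧ p.1 * x' + p.2 ∈ T))
      (fun p hp => Finset.mem_product.mpr (Finset.mem_filter.mp hp).2)]
  rw [Finset.sum_congr rfl (fun y hy => ?_), Finset.sum_const, smul_eq_mul,
    Finset.card_product, mul_one]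
  rw [Finset.filter_filter]
  rw [show (Finset.univ.filter fun p : F × F =>
        (p.1 * x + p.2 ∈ T ∧ p.1 * x' + p.2 ∈ T) ∧ (p.1 * x + p.2, p.1 * x' + p.2) = y)
      = Finset.univ.filter fun p : F × F => p.1 * x + p.2 = y.1 ∧ p.1 * x' + p.2 = y.2 from
    Finset.filter_congr (fun p _ => by
      rw [Finset.mem_product] at hy
      exact Iff.intro (fun h => ⟨congrArg Prod.fst h.2, congrArg Prod.snd h.2⟩)
        (fun h => ⟨⟨h.1 ▸ hy.1, h.2 ▸ hy.2⟩, Prod.ext h.1 h.2⟩))]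
  exact card_sol_two x x' hx y.1 y.2

lemma sum_Z (T : Finset F) (m : ℕ) (x : Fin m → F) :
    ∑ p : F × F, (Finset.univ.filter (fun j => p.1 * x j + p.2 ∈ T)).card
      = m * (T.card * Fintype.card F) := by
  simp_rw [Finset.card_filter]
  rw [Finset.sum_comm]
  rw [Finset.sum_congr rfl (fun j _ => ?_), Finset.sum_const, smul_eq_mul,
    Finset.card_univ, Fintype.card_fin]
  rw [← Finset.card_filter]
  exact card_hit_one T (x j)

lemma sum_Z_sq (T : Finset F) (m : ℕ) (x : Fin m → F) (hx : Function.Injective x) :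
    ∑ p : F × F, ((Finset.univ.filter (fun j => p.1 * x j + p.2 ∈ T)).card : ℤ)^2
      = m * (T.card * Fintype.card F) + (m^2 - m) * T.card^2 := by
  have key : ∀ p : F × F, ((Finset.univ.filter (fun j => p.1 * x j + p.2 ∈ T)).card : ℤ)^2
      = ∑ j : Fin m, ∑ j' : Fin m,
          (if p.1 * x j + p.2 ∈ T ∧ p.1 * x j' + p.2 ∈ T then (1 : ℤ) else 0) := by
    intro p
    rw [sq, Finset.card_filter]
    push_cast
    rw [Finset.sum_mul_sum]
    refine Finset.sum_congr rfl (fun j _ => Finset.sum_congr rfl (fun j' _ => ?_))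
    split_ifs with h1 h2 h3 h4 h5 <;> simp_all
  simp_rw [key]
  rw [Finset.sum_comm]
  conv_lhs => enter [2, j]; rw [Finset.sum_comm]
  have inner : ∀ j j' : Fin m,
      (∑ p : F × F, if p.1 * x j + p.2 ∈ T ∧ p.1 * x j' + p.2 ∈ T then (1 : ℤ) else 0)
      = (T.card : ℤ)^2 + (if j = j' then (T.card : ℤ) * Fintype.card F - T.card^2 else 0) := by
    intro j j'
    rw [Finset.sum_boole]
    by_cases h : j = j'
    · subst h
      simp only [and_self, if_true]
      rw [card_hit_one]
      push_cast; ring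
    · simp only [h, if_false, add_zero]
      rw [card_hit_two T (x j) (x j') (fun he => h (hx he))]
      push_cast; ring
  simp_rw [inner]
  simp only [Finset.sum_add_distrib, Finset.sum_const, Finset.sum_ite_eq, Finset.mem_univ,
    if_true, Finset.card_univ, Fintype.card_fin, nsmul_eq_mul]
  ring

lemma bad_count (T : Finset F) (hT : Fintype.card F ≤ 3 * T.card)
    (m : ℕ) (x : Fin m → F) (hx : Function.Injective x) :
    (Finset.univ.filter (fun p : F × F => ∀ j, p.1 * x j + p.2 ∉ T)).card * m
      ≤ 3 * (Fintype.card F)^2 := by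
  set q := Fintype.card F with hq
  set t := T.card with ht
  have hq1 : 1 ≤ q := Fintype.card_pos
  have ht1 : 1 ≤ t := by omega
  rcases Nat.eq_zero_or_pos m with hm | hm
  · simp [hm]
  -- variance identity
  have hvar : ∑ p : F × F,
      ((q : ℤ) * (Finset.univ.filter (fun j => p.1 * x j + p.2 ∈ T)).card - m * t)^2
      = (q : ℤ)^2 * m * t * (q - t) := by
    have e : ∀ p : F × F,
        ((q : ℤ) * (Finset.univ.filter (fun j => p.1 * x j + p.2 ∈ T)).card - m * t)^2
        = (q : ℤ)^2 * ((Finset.univ.filter (fun j => p.1 * x j + p.2 ∈ T)).card : ℤ)^2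
          - 2 * q * (m * t) * ((Finset.univ.filter (fun j => p.1 * x j + p.2 ∈ T)).card : ℤ)
          + (m * t : ℤ)^2 := by intro p; ring
    simp_rw [e]
    rw [Finset.sum_add_distrib, Finset.sum_sub_distrib, ← Finset.mul_sum, ← Finset.mul_sum,
      Finset.sum_const, Finset.card_univ, sum_Z_sq T m x hx]
    have hS1 : (∑ p : F × F,
        ((Finset.univ.filter (fun j => p.1 * x j + p.2 ∈ T)).card : ℤ))
        = (m : ℤ) * (t * q) := by
      rw [← Nat.cast_sum, sum_Z T m x]; push_cast; ring
    rw [hS1, Fintype.card_prod, nsmul_eq_mul]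
    simp only [← hq, ← ht]
    push_cast
    ring
  -- each bad p contributes (m*t)^2
  set B := Finset.univ.filter (fun p : F × F => ∀ j, p.1 * x j + p.2 ∉ T) with hB
  have hcontrib : ∀ p ∈ B,
      ((q : ℤ) * (Finset.univ.filter (fun j => p.1 * x j + p.2 ∈ T)).card - m * t)^2
      = ((m : ℤ) * t)^2 := by
    intro p hp
    rw [hB, Finset.mem_filter] at hp
    have : (Finset.univ.filter (fun j => p.1 * x j + p.2 ∈ T)) = ∅ := by
      apply Finset.filter_eq_empty_iff.mpr
      intro j _; exact hp.2 j
    rw [this]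
    simp only [Finset.card_empty, Nat.cast_zero, mul_zero, zero_sub, neg_sq]
  have hle : (B.card : ℤ) * ((m : ℤ) * t)^2 ≤ (q : ℤ)^2 * m * t * (q - t) := by
    rw [← hvar]
    calc (B.card : ℤ) * ((m : ℤ) * t)^2
        = ∑ p ∈ B, ((q : ℤ) * (Finset.univ.filter (fun j => p.1 * x j + p.2 ∈ T)).card - m * t)^2 := by
          rw [Finset.sum_congr rfl hcontrib, Finset.sum_const, nsmul_eq_mul]
      _ ≤ _ := Finset.sum_le_sum_of_subset_of_nonneg (Finset.subset_univ B)
            (fun p _ _ => sq_nonneg _)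
  -- conclude
  have hqt : (q : ℤ) - t ≤ 3 * t - t := by
    have : (q : ℤ) ≤ 3 * t := by exact_mod_cast hT
    omega
  have h2 : (q : ℤ)^2 * m * t * (q - t) ≤ (q : ℤ)^2 * m * t * (3 * t - t) :=
    mul_le_mul_of_nonneg_left hqt (by positivity)
  have key : (B.card : ℤ) * m * (m * t^2) ≤ (3 * q^2) * (m * t^2) := by
    nlinarith [hle, h2, sq_nonneg ((q:ℤ)*m*t)]
  have hpos : (0 : ℤ) < (m : ℤ) * t^2 :=
    mul_pos (by exact_mod_cast hm) (pow_pos (by exact_mod_cast ht1) 2)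
  have : (B.card : ℤ) * m ≤ 3 * q^2 := le_of_mul_le_mul_right key hpos
  exact_mod_cast this


/-- There is a sufficiently large constant `c` such that: for any finite
field `F` with `|F| = n·m` elements, partitioned into `n` blocks of `m` elements each
(given by a bijection `block : Fin n × Fin m ≃ F`), with `m ≥ c·n`, and for any
balanced two-sided partition of `F` (each side of size at least `|F|/3`, i.e.
`|F| ≤ 3·|side k|`), there exists an affine permutation `σ : x ↦ a·x + b` (`a ≠ 0`)
of `F` such that every block has, for each side `k`, some element mapped into side `k`
by `σ`. -/
theorem exists_good_affine_permutation :
    ∃ c : ℕ, 0 < c ∧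
      ∀ (F : Type) [Field F] [Fintype F] (n m : ℕ)
        (block : Fin n × Fin m ≃ F) (side : F → Bool),
        (∀ k : Bool, Fintype.card F ≤ 3 * Nat.card {x : F // side x = k}) →
        c * n ≤ m →
        ∃ a b : F, a ≠ 0 ∧
          ∀ (i : Fin n) (k : Bool), ∃ j : Fin m, side (a * block (i, j) + b) = k := by
  refine ⟨13, by norm_num, ?_⟩
  intro F _ _ n m block side hbal hm
  classical
  rcases Nat.eq_zero_or_pos n with hn | hn
  · subst hn
    exact ⟨1, 0, one_ne_zero, fun i => i.elim0⟩
  set q := Fintype.card F with hq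
  have hqnm : q = n * m := by
    rw [hq, ← Fintype.card_congr block, Fintype.card_prod, Fintype.card_fin, Fintype.card_fin]
  have hm13 : 13 ≤ m := le_trans (by omega) hm
  have hq13 : 13 ≤ q := by
    rw [hqnm]; calc 13 ≤ m := hm13
      _ = 1 * m := (one_mul m).symm
      _ ≤ n * m := Nat.mul_le_mul_right m hn
  -- sides as finsets
  set T : Bool → Finset F := fun k => Finset.univ.filter (fun y => side y = k) with hT
  have hTcard : ∀ k, q ≤ 3 * (T k).card := by
    intro k
    have := hbal k
    rwa [Nat.card_eq_fintype_card, Fintype.card_subtype] at this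
  -- bad sets
  set Bad : Fin n → Bool → Finset (F × F) := fun i k =>
    Finset.univ.filter (fun p : F × F => ∀ j, p.1 * block (i, j) + p.2 ∉ T k) with hBad
  have hinj : ∀ i : Fin n, Function.Injective (fun j : Fin m => block (i, j)) := by
    intro i j j' h
    have := block.injective h
    exact (Prod.mk.injEq _ _ _ _).mp this |>.2
  have hbadcard : ∀ i k, (Bad i k).card * m ≤ 3 * q^2 := by
    intro i k
    exact bad_count (T k) (hTcard k) m (fun j => block (i, j)) (hinj i)
  -- there is a good pair
  by_contra hcon
  push_neg at hcon
  have hcover : (Finset.univ.filter (fun p : F × F => p.1 ≠ 0))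
      ⊆ Finset.univ.biUnion (fun ik : Fin n × Bool => Bad ik.1 ik.2) := by
    intro p hp
    rw [Finset.mem_filter] at hp
    obtain ⟨i, k, hik⟩ := hcon p.1 p.2 hp.2
    refine Finset.mem_biUnion.mpr ⟨(i, k), Finset.mem_univ _, ?_⟩
    rw [hBad]
    simp only [Finset.mem_filter, Finset.mem_univ, true_and]
    intro j
    rw [hT]
    simp only [Finset.mem_filter, Finset.mem_univ, true_and]
    exact hik j
  have hA : (Finset.univ.filter (fun p : F × F => p.1 ≠ 0)).card = (q - 1) * q := by
    rw [show (Finset.univ.filter (fun p : F × F => p.1 ≠ 0))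
        = (Finset.univ.filter (fun a : F => a ≠ 0)) ×ˢ (Finset.univ : Finset F) by
      ext p; simp [Finset.mem_product]]
    rw [Finset.card_product, Finset.filter_ne', Finset.card_erase_of_mem (Finset.mem_univ 0),
      Finset.card_univ]
  have hcards : (q - 1) * q ≤ ∑ ik : Fin n × Bool, (Bad ik.1 ik.2).card := by
    rw [← hA]
    exact le_trans (Finset.card_le_card hcover) (Finset.card_biUnion_le)
  have hfinal : (q - 1) * q * m ≤ 2 * n * (3 * q^2) := by
    calc (q - 1) * q * m ≤ (∑ ik : Fin n × Bool, (Bad ik.1 ik.2).card) * m :=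
          Nat.mul_le_mul_right m hcards
      _ = ∑ ik : Fin n × Bool, (Bad ik.1 ik.2).card * m := by rw [Finset.sum_mul]
      _ ≤ ∑ ik : Fin n × Bool, 3 * q^2 :=
          Finset.sum_le_sum (fun ik _ => hbadcard ik.1 ik.2)
      _ = 2 * n * (3 * q^2) := by
          rw [Finset.sum_const, Finset.card_univ, Fintype.card_prod, Fintype.card_fin,
            Fintype.card_bool, smul_eq_mul]
          ring
  -- arithmetic contradiction
  have h1 : 13 * n ≤ m := hm
  have h12 : 12 * q ≤ 13 * (q - 1) := by omega
  have hlow : 12 * (n * q) * q ≤ (q - 1) * q * m := by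
    calc 12 * (n * q) * q = (12 * q) * n * q := by ring
      _ ≤ (13 * (q - 1)) * n * q := Nat.mul_le_mul_right q (Nat.mul_le_mul_right n h12)
      _ = (q - 1) * q * (13 * n) := by ring
      _ ≤ (q - 1) * q * m := Nat.mul_le_mul_left _ h1
  have : 12 * (n * q) * q ≤ 6 * (n * q) * q := by
    calc 12 * (n * q) * q ≤ (q - 1) * q * m := hlow
      _ ≤ 2 * n * (3 * q^2) := hfinal
      _ = 6 * (n * q) * q := by ring
  have hnq : 0 < n * q := Nat.mul_pos hn (by omega)
  nlinarith [this, hnq]
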